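/- arXiv:2206.13086 — 3 statements merged into one kernel-verified Lean document; each statement's English description precedes it below -/
import Mathlib

section
/- Assume q_1 ≥ q_2 ≥ ⋯ ≥ q_d and γ ≥ 0. Define for τ ∈ {0,…,d}: π̄(τ) = Σ_{s=1}^{τ} Σ_{l=0}^{d−1} (2 q_s/(τ+l+γ+1)) P(Γ_{∖s} = l) + Σ_{l=0}^{d} (γ/(τ+l+γ)) P(Γ = l), with the convention γ/(τ+l+γ) := 0 when τ = l = γ = 0. If 1 ≤ τ ≤ d−1 and Σ_{s=1}^{τ} q_s ≥ (τ + γ + d) q_{τ+1}, then π̄(τ) ≥ π̄(τ') for every τ' ∈ {τ+1, …, d}. -/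
open Finset

/-- `P(Γ_S = l)` where `Γ_S = Σ_{j ∈ S} Bⱼ` is a Poisson-binomial random variable with
independent Bernoulli summands of success probabilities `qⱼ`. -/
noncomputable def pmfOn {d : ℕ} (S : Finset (Fin d)) (q : Fin d → ℝ) (l : ℕ) : ℝ :=
  ∑ y : Fin d → Bool,
    if (∀ j, j ∉ S → y j = false) ∧ (S.filter (fun j => y j = true)).card = l then
      ∏ j ∈ S, (if y j = true then q j else 1 - q j)
    else 0

lemma pmfOn_eq {d : ℕ} (S : Finset (Fin d)) (q : Fin d → ℝ) (l : ℕ) :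
    pmfOn S q l = ∑ T ∈ S.powersetCard l, (∏ j ∈ T, q j) * ∏ j ∈ S \ T, (1 - q j) := by
  unfold pmfOn
  rw [← Finset.sum_filter]
  refine Finset.sum_nbij' (fun y => S.filter (fun j => y j = true))
    (fun T => fun j => decide (j ∈ T)) ?_ ?_ ?_ ?_ ?_
  · intro y hy
    simp only [Finset.mem_filter, Finset.mem_univ, true_and] at hy
    simp [Finset.mem_powersetCard, Finset.filter_subset, hy.2]
  · intro T hT
    simp only [Finset.mem_powersetCard] at hT
    simp only [Finset.mem_filter, Finset.mem_univ, true_and]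
    constructor
    · intro j hj
      simp only [decide_eq_false_iff_not]
      exact fun hjT => hj (hT.1 hjT)
    · rw [← hT.2]
      congr 1
      ext j
      simp only [Finset.mem_filter, decide_eq_true_eq]
      exact ⟨fun h => h.2, fun h => ⟨hT.1 h, h⟩⟩
  · intro y hy
    simp only [Finset.mem_filter, Finset.mem_univ, true_and] at hy
    funext j
    by_cases hj : j ∈ S
    · simp [hj]
    · simp [hj, hy.1 j hj]
  · intro T hT
    simp only [Finset.mem_powersetCard] at hT
    ext j
    simp only [Finset.mem_filter, decide_eq_true_eq]
    exact ⟨fun h => h.2, fun h => ⟨hT.1 h, h⟩⟩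
  · intro y hy
    rw [← Finset.prod_filter_mul_prod_filter_not S (fun j => y j = true)]
    congr 1
    · exact Finset.prod_congr rfl (fun j hj => by simp [(Finset.mem_filter.mp hj).2])
    · rw [Finset.filter_not]
      exact Finset.prod_congr rfl (fun j hj => by
        simp only [Finset.mem_sdiff, Finset.mem_filter] at hj
        have : ¬ (y j = true) := fun h => hj.2 ⟨hj.1, h⟩
        simp [this])

lemma pmfOn_nonneg {d : ℕ} (S : Finset (Fin d)) {q : Fin d → ℝ}
    (hq : ∀ j, q j ∈ Set.Icc (0:ℝ) 1) (l : ℕ) : 0 ≤ pmfOn S q l := by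
  rw [pmfOn_eq]
  refine Finset.sum_nonneg fun T _ => mul_nonneg ?_ ?_
  · exact Finset.prod_nonneg fun j _ => (hq j).1
  · exact Finset.prod_nonneg fun j _ => by linarith [(hq j).2]

lemma pmfOn_eq_zero {d : ℕ} {S : Finset (Fin d)} (q : Fin d → ℝ) {l : ℕ}
    (h : S.card < l) : pmfOn S q l = 0 := by
  rw [pmfOn_eq, Finset.powersetCard_eq_empty.mpr h, Finset.sum_empty]

lemma pmfOn_zero {d : ℕ} (S : Finset (Fin d)) (q : Fin d → ℝ) :
    pmfOn S q 0 = ∏ j ∈ S, (1 - q j) := by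
  rw [pmfOn_eq]
  simp [Finset.powersetCard_zero]

lemma pmfOn_zero_erase {d : ℕ} {S : Finset (Fin d)} {t : Fin d} (ht : t ∈ S) (q : Fin d → ℝ) :
    pmfOn S q 0 = (1 - q t) * pmfOn (S.erase t) q 0 := by
  rw [pmfOn_zero, pmfOn_zero, ← Finset.mul_prod_erase S _ ht]

lemma pmfOn_succ_erase {d : ℕ} {S : Finset (Fin d)} {t : Fin d} (ht : t ∈ S) (q : Fin d → ℝ)
    (l : ℕ) :
    pmfOn S q (l+1) = q t * pmfOn (S.erase t) q l + (1 - q t) * pmfOn (S.erase t) q (l+1) := by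
  set E := S.erase t with hE
  have htE : t ∉ E := Finset.notMem_erase t S
  have h1 : S = insert t E := (Finset.insert_erase ht).symm
  have hdisj : Disjoint (E.powersetCard (l+1)) ((E.powersetCard l).image (insert t)) := by
    rw [Finset.disjoint_left]
    intro T hT hT'
    rw [Finset.mem_powersetCard] at hT
    rw [Finset.mem_image] at hT'
    obtain ⟨U, _, rfl⟩ := hT'
    exact htE (hT.1 (Finset.mem_insert_self t U))
  have hsd : ∀ T : Finset (Fin d), T ⊆ E → insert t E \ T = insert t (E \ T) := by
    intro T hTE
    ext x
    simp only [Finset.mem_sdiff, Finset.mem_insert]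
    constructor
    · rintro ⟨h1 | h1, h2⟩
      · exact Or.inl h1
      · exact Or.inr ⟨h1, h2⟩
    · rintro (h1 | ⟨h1, h2⟩)
      · exact ⟨Or.inl h1, fun hx => htE (h1 ▸ hTE hx)⟩
      · exact ⟨Or.inr h1, h2⟩
  rw [pmfOn_eq, pmfOn_eq, pmfOn_eq]
  conv_lhs => rw [h1, Finset.powersetCard_succ_insert htE]
  rw [Finset.sum_union hdisj]
  have hA : ∑ T ∈ E.powersetCard (l+1), (∏ j ∈ T, q j) * ∏ j ∈ insert t E \ T, (1 - q j)
      = (1 - q t) * ∑ T ∈ E.powersetCard (l+1), (∏ j ∈ T, q j) * ∏ j ∈ E \ T, (1 - q j) := by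
    rw [Finset.mul_sum]
    refine Finset.sum_congr rfl fun T hT => ?_
    rw [Finset.mem_powersetCard] at hT
    rw [hsd T hT.1, Finset.prod_insert (fun h => htE (Finset.mem_sdiff.mp h).1)]
    ring
  have hB : ∑ T ∈ (E.powersetCard l).image (insert t),
        (∏ j ∈ T, q j) * ∏ j ∈ insert t E \ T, (1 - q j)
      = q t * ∑ T ∈ E.powersetCard l, (∏ j ∈ T, q j) * ∏ j ∈ E \ T, (1 - q j) := by
    rw [Finset.sum_image, Finset.mul_sum]
    · refine Finset.sum_congr rfl fun T hT => ?_
      rw [Finset.mem_powersetCard] at hT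
      have htT : t ∉ T := fun h => htE (hT.1 h)
      have h2 : insert t E \ insert t T = E \ T := by
        ext x
        simp only [Finset.mem_sdiff, Finset.mem_insert, not_or]
        constructor
        · rintro ⟨h1 | h1, h2, h3⟩
          · exact absurd h1 h2
          · exact ⟨h1, h3⟩
        · rintro ⟨h1, h2⟩
          exact ⟨Or.inr h1, fun hx => htE (hx ▸ h1), h2⟩
      rw [h2, Finset.prod_insert htT]
      ring
    · intro T hT U hU hTU
      rw [Finset.mem_coe, Finset.mem_powersetCard] at hT hU
      have htT : t ∉ T := fun h => htE (hT.1 h)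
      have htU : t ∉ U := fun h => htE (hU.1 h)
      rw [← Finset.erase_insert htT, ← Finset.erase_insert htU, hTU]
  rw [hA, hB]
  ring

lemma sum_weighted {d : ℕ} (q : Fin d → ℝ) (c : ℕ → ℝ) {S : Finset (Fin d)} {t : Fin d}
    (ht : t ∈ S) {n : ℕ} (hcard : S.card < n) :
    ∑ l ∈ range n, c l * pmfOn S q l
      = ∑ l ∈ range n, c l * pmfOn (S.erase t) q l
        - q t * ∑ l ∈ range (n-1), (c l - c (l+1)) * pmfOn (S.erase t) q l := by
  obtain ⟨m, rfl⟩ : ∃ m, n = m + 1 := ⟨n - 1, by omega⟩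
  simp only [Nat.add_sub_cancel]
  set E := S.erase t with hE
  have hPm : pmfOn E q m = 0 := by
    refine pmfOn_eq_zero q ?_
    have h1 := Finset.card_erase_of_mem ht
    have h2 : 1 ≤ S.card := Finset.card_pos.mpr ⟨t, ht⟩
    rw [← hE] at h1
    omega
  rw [Finset.sum_range_succ' (fun l => c l * pmfOn S q l) m,
      Finset.sum_range_succ' (fun l => c l * pmfOn E q l) m]
  simp only [pmfOn_succ_erase ht q, pmfOn_zero_erase ht q, ← hE]
  have hsplit : ∑ l ∈ range m, c (l+1) * (q t * pmfOn E q l + (1 - q t) * pmfOn E q (l+1))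
      = q t * ∑ l ∈ range m, c (l+1) * pmfOn E q l
        + (1 - q t) * ∑ l ∈ range m, c (l+1) * pmfOn E q (l+1) := by
    rw [Finset.mul_sum, Finset.mul_sum, ← Finset.sum_add_distrib]
    exact Finset.sum_congr rfl fun l _ => by ring
  have hsub : ∑ l ∈ range m, (c l - c (l+1)) * pmfOn E q l
      = ∑ l ∈ range m, c l * pmfOn E q l - ∑ l ∈ range m, c (l+1) * pmfOn E q l := by
    rw [← Finset.sum_sub_distrib]
    exact Finset.sum_congr rfl fun l _ => by ring
  have hCB : (∑ l ∈ range m, c (l+1) * pmfOn E q (l+1)) + c 0 * pmfOn E q 0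
      = ∑ l ∈ range m, c l * pmfOn E q l := by
    have h1 := Finset.sum_range_succ' (fun l => c l * pmfOn E q l) m
    have h2 := Finset.sum_range_succ (fun l => c l * pmfOn E q l) m
    simp only [hPm] at h2
    linarith
  rw [hsplit, hsub]
  linear_combination (-(q t)) * hCB

lemma sum_comparison {d : ℕ} {q : Fin d → ℝ} (hq : ∀ j, q j ∈ Set.Icc (0:ℝ) 1) (c : ℕ → ℝ)
    (hc : ∀ l, c (l+1) ≤ c l) {s t : Fin d} (hst : s ≠ t) (hq' : q t ≤ q s) :
    ∑ l ∈ range d, c l * pmfOn (univ.erase t) q l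
      ≤ ∑ l ∈ range d, c l * pmfOn (univ.erase s) q l := by
  have hd : 0 < d := Fin.pos s
  have hcards : (univ.erase s : Finset (Fin d)).card < d := by
    rw [Finset.card_erase_of_mem (Finset.mem_univ s), Finset.card_univ, Fintype.card_fin]; omega
  have hcardt : (univ.erase t : Finset (Fin d)).card < d := by
    rw [Finset.card_erase_of_mem (Finset.mem_univ t), Finset.card_univ, Fintype.card_fin]; omega
  have hts : t ∈ (univ.erase s : Finset (Fin d)) :=
    Finset.mem_erase.mpr ⟨fun h => hst h.symm, Finset.mem_univ t⟩
  have hstm : s ∈ (univ.erase t : Finset (Fin d)) :=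
    Finset.mem_erase.mpr ⟨hst, Finset.mem_univ s⟩
  have hcomm : (univ.erase s : Finset (Fin d)).erase t = (univ.erase t).erase s :=
    Finset.erase_right_comm
  rw [sum_weighted q c hts hcards, sum_weighted q c hstm hcardt, hcomm]
  have hD : 0 ≤ ∑ l ∈ range (d-1), (c l - c (l+1)) * pmfOn ((univ.erase t).erase s) q l :=
    Finset.sum_nonneg fun l _ => mul_nonneg (by linarith [hc l]) (pmfOn_nonneg _ hq l)
  nlinarith

/-- The volume score for sorted probabilities `q_1 ≥ ⋯ ≥ q_d`:
`π̄(τ) = Σ_{s=1}^{τ} Σ_{l=0}^{d-1} (2 q_s/(τ+l+γ+1)) P(Γ_{∖s} = l)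
        + Σ_{l=0}^{d} (γ/(τ+l+γ)) P(Γ = l)`
(the convention `γ/(τ+l+γ) := 0` when `τ = l = γ = 0` is Lean's `0/0 = 0`). -/
noncomputable def piBar {d : ℕ} (γ : ℝ) (q : Fin d → ℝ) (τ : ℕ) : ℝ :=
  (∑ s ∈ Finset.univ.filter (fun s : Fin d => (s : ℕ) < τ), ∑ l ∈ Finset.range d,
      (2 * q s / ((τ : ℝ) + (l : ℝ) + γ + 1)) * pmfOn (Finset.univ.erase s) q l)
  + ∑ l ∈ Finset.range (d + 1), (γ / ((τ : ℝ) + (l : ℝ) + γ)) * pmfOn Finset.univ q l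

lemma piBar_step {d : ℕ} (γ : ℝ) (hγ : 0 ≤ γ) (q : Fin d → ℝ)
    (hq : ∀ j, q j ∈ Set.Icc (0 : ℝ) 1) (hsort : Antitone q)
    (τ : ℕ) (hτ1 : 1 ≤ τ) (hτd : τ < d)
    (hcond : ((τ : ℝ) + γ + d) * q ⟨τ, hτd⟩ ≤
      ∑ s ∈ Finset.univ.filter (fun s : Fin d => (s : ℕ) < τ), q s) :
    piBar γ q (τ + 1) ≤ piBar γ q τ := by
  classical
  set t0 : Fin d := ⟨τ, hτd⟩ with ht0
  have hq0 : ∀ j, (0:ℝ) ≤ q j := fun j => (hq j).1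
  -- the coefficient sequence
  set c : ℕ → ℝ := fun l => 2 / ((τ:ℝ) + l + γ + 1) - 2 / ((τ:ℝ) + l + γ + 2) with hc
  have hXpos : ∀ l : ℕ, (0:ℝ) < (τ:ℝ) + l + γ + 1 := fun l => by positivity
  have hcform : ∀ l : ℕ, c l = 2 / (((τ:ℝ) + l + γ + 1) * ((τ:ℝ) + l + γ + 2)) := by
    intro l
    have h1 : ((τ:ℝ) + l + γ + 1) ≠ 0 := ne_of_gt (hXpos l)
    have h2 : ((τ:ℝ) + l + γ + 2) ≠ 0 := by positivity
    rw [hc]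
    field_simp
    ring
  have hcpos : ∀ l, 0 ≤ c l := by
    intro l
    rw [hcform l]
    positivity
  have hcmono : ∀ l, c (l+1) ≤ c l := by
    intro l
    rw [hcform l, hcform (l+1)]
    push_cast
    apply div_le_div_of_nonneg_left (by norm_num) (by positivity)
    have := hXpos l
    nlinarith
  -- split the filter at τ
  have hins : (univ.filter (fun s : Fin d => (s : ℕ) < τ + 1))
      = insert t0 (univ.filter (fun s : Fin d => (s : ℕ) < τ)) := by
    ext s
    simp only [Finset.mem_filter, Finset.mem_univ, true_and, Finset.mem_insert, Fin.ext_iff, ht0]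
    omega
  have ht0n : t0 ∉ (univ.filter (fun s : Fin d => (s : ℕ) < τ)) := by
    simp [ht0]
  -- tail comparison
  have htail : ∑ l ∈ Finset.range (d + 1), (γ / (((τ:ℕ)+1 : ℝ) + (l : ℝ) + γ)) * pmfOn (univ : Finset (Fin d)) q l
      ≤ ∑ l ∈ Finset.range (d + 1), (γ / ((τ : ℝ) + (l : ℝ) + γ)) * pmfOn (univ : Finset (Fin d)) q l := by
    refine Finset.sum_le_sum fun l _ => ?_
    refine mul_le_mul_of_nonneg_right ?_ (pmfOn_nonneg _ hq l)
    apply div_le_div_of_nonneg_left hγ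
    · have : (1:ℝ) ≤ (τ:ℝ) := by exact_mod_cast hτ1
      positivity
    · push_cast; linarith
  -- per-s difference identity
  have hdiff : ∀ s : Fin d,
      (∑ l ∈ Finset.range d, (2 * q s / ((τ : ℝ) + (l : ℝ) + γ + 1)) * pmfOn (univ.erase s) q l)
      - (∑ l ∈ Finset.range d, (2 * q s / (((τ:ℕ)+1 : ℝ) + (l : ℝ) + γ + 1)) * pmfOn (univ.erase s) q l)
      = q s * ∑ l ∈ Finset.range d, c l * pmfOn (univ.erase s) q l := by
    intro s
    rw [Finset.mul_sum, ← Finset.sum_sub_distrib]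
    refine Finset.sum_congr rfl fun l _ => ?_
    rw [hc]
    push_cast
    ring
  -- F : the t0 weighted sum
  set F : ℝ := ∑ l ∈ Finset.range d, c l * pmfOn (univ.erase t0) q l with hF
  have hFnn : 0 ≤ F :=
    Finset.sum_nonneg fun l _ => mul_nonneg (hcpos l) (pmfOn_nonneg _ hq l)
  -- comparison for each s < τ
  have hcomp : ∀ s ∈ univ.filter (fun s : Fin d => (s : ℕ) < τ),
      q s * F ≤ q s * ∑ l ∈ Finset.range d, c l * pmfOn (univ.erase s) q l := by
    intro s hs
    simp only [Finset.mem_filter, Finset.mem_univ, true_and] at hs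
    refine mul_le_mul_of_nonneg_left ?_ (hq0 s)
    refine sum_comparison hq c hcmono (fun h => ?_) (hsort ?_)
    · rw [h, ht0] at hs; simp at hs
    · rw [Fin.le_def]; simp only [ht0]; omega
  -- the inner term at t0 is small
  have hlast : ∑ l ∈ Finset.range d, (2 * q t0 / (((τ:ℕ)+1 : ℝ) + (l : ℝ) + γ + 1)) * pmfOn (univ.erase t0) q l
      ≤ (((τ : ℝ) + γ + d) * q t0) * F := by
    rw [hF, Finset.mul_sum]
    refine Finset.sum_le_sum fun l hl => ?_
    rw [Finset.mem_range] at hl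
    have hP := pmfOn_nonneg (univ.erase t0) hq l
    have key : 2 / (((τ:ℕ)+1 : ℝ) + (l : ℝ) + γ + 1) ≤ ((τ : ℝ) + γ + d) * c l := by
      rw [hcform l]
      have hX := hXpos l
      have hX2 : (0:ℝ) < (τ:ℝ) + l + γ + 2 := by positivity
      have hle : (τ:ℝ) + l + γ + 1 ≤ (τ:ℝ) + γ + d := by
        have : (l:ℝ) + 1 ≤ (d:ℝ) := by exact_mod_cast hl
        linarith
      have h1 : (((τ:ℕ)+1 : ℝ) + (l : ℝ) + γ + 1) = (τ:ℝ) + l + γ + 2 := by push_cast; ring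
      rw [h1]
      calc 2 / ((τ:ℝ) + l + γ + 2)
          = ((τ:ℝ) + l + γ + 1) * (2 / (((τ:ℝ) + l + γ + 1) * ((τ:ℝ) + l + γ + 2))) := by
            field_simp
        _ ≤ ((τ : ℝ) + γ + d) * (2 / (((τ:ℝ) + l + γ + 1) * ((τ:ℝ) + l + γ + 2))) := by
            refine mul_le_mul_of_nonneg_right hle (by positivity)
    calc 2 * q t0 / (((τ:ℕ)+1 : ℝ) + (l : ℝ) + γ + 1) * pmfOn (univ.erase t0) q l
        = q t0 * (2 / (((τ:ℕ)+1 : ℝ) + (l : ℝ) + γ + 1)) * pmfOn (univ.erase t0) q l := by ring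
      _ ≤ q t0 * (((τ : ℝ) + γ + d) * c l) * pmfOn (univ.erase t0) q l := by
          refine mul_le_mul_of_nonneg_right (mul_le_mul_of_nonneg_left key (hq0 t0)) hP
      _ = ((τ : ℝ) + γ + d) * q t0 * (c l * pmfOn (univ.erase t0) q l) := by ring
  -- combine inner comparisons
  have hmain : ∑ l ∈ Finset.range d, (2 * q t0 / (((τ:ℕ)+1 : ℝ) + (l : ℝ) + γ + 1)) * pmfOn (univ.erase t0) q l
      ≤ ∑ s ∈ univ.filter (fun s : Fin d => (s : ℕ) < τ),
          (q s * ∑ l ∈ Finset.range d, c l * pmfOn (univ.erase s) q l) := by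
    calc ∑ l ∈ Finset.range d, (2 * q t0 / (((τ:ℕ)+1 : ℝ) + (l : ℝ) + γ + 1)) * pmfOn (univ.erase t0) q l
        ≤ (((τ : ℝ) + γ + d) * q t0) * F := hlast
      _ ≤ (∑ s ∈ univ.filter (fun s : Fin d => (s : ℕ) < τ), q s) * F :=
          mul_le_mul_of_nonneg_right hcond hFnn
      _ = ∑ s ∈ univ.filter (fun s : Fin d => (s : ℕ) < τ), q s * F := by
          rw [Finset.sum_mul]
      _ ≤ _ := Finset.sum_le_sum hcomp
  -- assemble
  unfold piBar
  rw [hins, Finset.sum_insert ht0n]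
  have hsum : ∑ s ∈ univ.filter (fun s : Fin d => (s : ℕ) < τ),
        (q s * ∑ l ∈ Finset.range d, c l * pmfOn (univ.erase s) q l)
      = (∑ s ∈ univ.filter (fun s : Fin d => (s : ℕ) < τ), ∑ l ∈ Finset.range d,
          (2 * q s / ((τ : ℝ) + (l : ℝ) + γ + 1)) * pmfOn (univ.erase s) q l)
        - ∑ s ∈ univ.filter (fun s : Fin d => (s : ℕ) < τ), ∑ l ∈ Finset.range d,
          (2 * q s / (((τ:ℕ)+1 : ℝ) + (l : ℝ) + γ + 1)) * pmfOn (univ.erase s) q l := by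
    rw [← Finset.sum_sub_distrib]
    exact Finset.sum_congr rfl fun s _ => (hdiff s).symm
  rw [hsum] at hmain
  push_cast at hmain htail ⊢
  linarith

lemma piBar_aux {d : ℕ} (γ : ℝ) (hγ : 0 ≤ γ) (q : Fin d → ℝ)
    (hq : ∀ j, q j ∈ Set.Icc (0 : ℝ) 1) (hsort : Antitone q) :
    ∀ n τ (hτ1 : 1 ≤ τ) (hτd : τ < d),
      (((τ : ℝ) + γ + d) * q ⟨τ, hτd⟩ ≤
        ∑ s ∈ Finset.univ.filter (fun s : Fin d => (s : ℕ) < τ), q s) →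
      τ + n ≤ d → piBar γ q (τ + n) ≤ piBar γ q τ := by
  intro n
  induction n with
  | zero => intro τ _ _ _ _; simp
  | succ n ih =>
    intro τ hτ1 hτd hcond hle
    have hstep := piBar_step γ hγ q hq hsort τ hτ1 hτd hcond
    rcases Nat.lt_or_ge (τ + 1) d with h | h
    · have hins : (univ.filter (fun s : Fin d => (s : ℕ) < τ + 1))
          = insert (⟨τ, hτd⟩ : Fin d) (univ.filter (fun s : Fin d => (s : ℕ) < τ)) := by
        ext s
        simp only [Finset.mem_filter, Finset.mem_univ, true_and, Finset.mem_insert, Fin.ext_iff]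
        omega
      have ht0n : (⟨τ, hτd⟩ : Fin d) ∉ (univ.filter (fun s : Fin d => (s : ℕ) < τ)) := by simp
      have hqle : q ⟨τ + 1, h⟩ ≤ q ⟨τ, hτd⟩ := hsort (by rw [Fin.le_def]; simp)
      have hpos : (0:ℝ) ≤ ((τ:ℝ) + 1 + γ + d) := by positivity
      have hcond' : (((τ + 1 : ℕ) : ℝ) + γ + d) * q ⟨τ + 1, h⟩ ≤
          ∑ s ∈ Finset.univ.filter (fun s : Fin d => (s : ℕ) < τ + 1), q s := by
        rw [hins, Finset.sum_insert ht0n]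
        push_cast
        calc ((τ:ℝ) + 1 + γ + d) * q ⟨τ + 1, h⟩
            ≤ ((τ:ℝ) + 1 + γ + d) * q ⟨τ, hτd⟩ := mul_le_mul_of_nonneg_left hqle hpos
          _ = q ⟨τ, hτd⟩ + ((τ:ℝ) + γ + d) * q ⟨τ, hτd⟩ := by ring
          _ ≤ q ⟨τ, hτd⟩ + ∑ s ∈ Finset.univ.filter (fun s : Fin d => (s : ℕ) < τ), q s := by
              linarith
      have := ih (τ + 1) (by omega) h hcond' (by omega)
      have heq : τ + (n + 1) = (τ + 1) + n := by omega
      rw [heq]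
      linarith
    · have hn : n = 0 := by omega
      subst hn
      exact hstep

/-- **Shrinkage.** If `q_1 ≥ ⋯ ≥ q_d`, `γ ≥ 0`, `1 ≤ τ ≤ d-1` and
`Σ_{s=1}^{τ} q_s ≥ (τ + γ + d) q_{τ+1}`, then `π̄(τ) ≥ π̄(τ')` for every `τ' ∈ {τ+1,…,d}`. -/
theorem piBar_shrinkage {d : ℕ} (γ : ℝ) (hγ : 0 ≤ γ) (q : Fin d → ℝ)
    (hq : ∀ j, q j ∈ Set.Icc (0 : ℝ) 1) (hsort : Antitone q)
    (τ : ℕ) (hτ1 : 1 ≤ τ) (hτd : τ < d)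
    (hcond : ((τ : ℝ) + γ + d) * q ⟨τ, hτd⟩ ≤
      ∑ s ∈ Finset.univ.filter (fun s : Fin d => (s : ℕ) < τ), q s) :
    ∀ τ', τ < τ' → τ' ≤ d → piBar γ q τ' ≤ piBar γ q τ := by
  intro τ' h1 h2
  have heq : τ + (τ' - τ) = τ' := by omega
  have := piBar_aux γ hγ q hq hsort (τ' - τ) τ hτ1 hτd hcond (by omega)
  rwa [heq] at this
end

section
/- Assume q_1 ≥ q_2 ≥ ⋯ ≥ q_d, γ ≥ 0 and 1 ≤ τ ≤ d. Define ω_{τ,l} = Σ_{s=1}^{τ} q_s P(Γ_{∖s} = l) for l ∈ {0,…,d−1}. Then for any integers 0 ≤ l_L ≤ l_U ≤ d−1: (i) Σ_{l=l_U+1}^{d−1} 2 ω_{τ,l}/(τ+l+γ+1) ≤ (2τ/(τ+l_U+γ+1)) P(Γ > l_U), and (ii) Σ_{l=0}^{l_L−1} 2 ω_{τ,l}/(τ+l+γ+1) ≤ (2τ/(τ+γ+1)) P(Γ ≤ l_L). Hence the error of truncating the sum Σ_{l=0}^{d−1} 2 ω_{τ,l}/(τ+l+γ+1) to l ∈ {l_L,…,l_U}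 is at most (2τ/(τ+l_U+γ+1)) P(Γ > l_U) + (2τ/(τ+γ+1)) P(Γ ≤ l_L). -/
open Finset

/-- Weight of a binary configuration `y` under independent Bernoulli probabilities `q`. -/
noncomputable def bw {d : ℕ} (q : Fin d → ℝ) (y : Fin d → Bool) : ℝ :=
  ∏ j, if y j = true then q j else 1 - q j

/-- Number of `true` coordinates of `y`. -/
def cnt {d : ℕ} (y : Fin d → Bool) : ℕ :=
  (Finset.univ.filter (fun j => y j = true)).card

/-- `P(Γ > l)` for the full Poisson-binomial variable `Γ = Σⱼ Bⱼ`. -/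
noncomputable def probGt {d : ℕ} (q : Fin d → ℝ) (l : ℕ) : ℝ :=
  ∑ y : Fin d → Bool, if l < cnt y then bw q y else 0

/-- `P(Γ ≤ l)` for the full Poisson-binomial variable `Γ = Σⱼ Bⱼ`. -/
noncomputable def probLe {d : ℕ} (q : Fin d → ℝ) (l : ℕ) : ℝ :=
  ∑ y : Fin d → Bool, if cnt y ≤ l then bw q y else 0

/-- `ω_{τ,l} = Σ_{s=1}^{τ} q_s P(Γ_{∖s} = l)`. -/
noncomputable def omegaTL {d : ℕ} (q : Fin d → ℝ) (τ l : ℕ) : ℝ :=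
  ∑ s ∈ Finset.univ.filter (fun s : Fin d => (s : ℕ) < τ),
    q s * pmfOn (Finset.univ.erase s) q l

namespace OmegaAux








noncomputable def pG (q : Fin d → ℝ) (k : ℕ) : ℝ :=
  ∑ y : Fin d → Bool, if cnt y = k then bw q y else 0

lemma bw_nonneg (q : Fin d → ℝ) (hq : ∀ j, q j ∈ Set.Icc (0:ℝ) 1) (y : Fin d → Bool) :
    0 ≤ bw q y := by
  unfold bw
  apply Finset.prod_nonneg
  intro j _
  rcases hq j with ⟨h0, h1⟩
  split <;> linarith

lemma pG_nonneg (q : Fin d → ℝ) (hq : ∀ j, q j ∈ Set.Icc (0:ℝ) 1) (k : ℕ) :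
    0 ≤ pG q k := by
  apply Finset.sum_nonneg
  intro y _
  split
  · exact bw_nonneg q hq y
  · exact le_rfl

lemma key (q : Fin d → ℝ) (s : Fin d) (l : ℕ) :
    q s * pmfOn (Finset.univ.erase s) q l =
      ∑ y : Fin d → Bool, if cnt y = l + 1 ∧ y s = true then bw q y else 0 := by
  classical
  have hinv : Function.Involutive (fun y : Fin d → Bool => Function.update y s (!(y s))) := by
    intro y
    funext j
    rcases eq_or_ne j s with rfl | hj
    · simp
    · simp [Function.update_of_ne hj]
  set e := hinv.toPerm with he
  have hcomp : ∀ g : (Fin d → Bool) → ℝ, (∑ y, g (e y)) = ∑ y, g y :=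
    fun g => Equiv.sum_comp e g
  rw [← hcomp (fun y => if cnt y = l + 1 ∧ y s = true then bw q y else 0)]
  unfold pmfOn
  rw [Finset.mul_sum]
  apply Finset.sum_congr rfl
  intro y _
  have hey : ∀ j, e y j = Function.update y s (!(y s)) j := fun j => rfl
  by_cases hys : y s = true
  · have hc1 : ¬ ((∀ j, j ∉ Finset.univ.erase s → y j = false) ∧
        ((Finset.univ.erase s).filter (fun j => y j = true)).card = l) := by
      rintro ⟨h1, -⟩
      have := h1 s (Finset.notMem_erase s _)
      rw [hys] at this
      simp at this
    have hc2 : ¬ (cnt (e y) = l + 1 ∧ e y s = true) := by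
      rintro ⟨-, h2⟩
      rw [hey s, Function.update_self, hys] at h2
      simp at h2
    rw [if_neg hc1, if_neg hc2, mul_zero]
  · have hys' : y s = false := by simp at hys; exact hys
    -- first conjunct holds
    have hfc : ∀ j, j ∉ Finset.univ.erase s → y j = false := by
      intro j hj
      have : j = s := by
        by_contra hjs
        exact hj (Finset.mem_erase.mpr ⟨hjs, Finset.mem_univ j⟩)
      rw [this, hys']
    have heys : e y s = true := by rw [hey s, Function.update_self, hys']; rfl
    have hfilter : (Finset.univ.erase s).filter (fun j => y j = true)
        = Finset.univ.filter (fun j => y j = true) := by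
      ext j
      rcases eq_or_ne j s with rfl | hj
      · simp [hys']
      · simp [hj]
    have hsnot : s ∉ Finset.univ.filter (fun j => y j = true) := by
      simp [hys']
    have hfe : Finset.univ.filter (fun j => e y j = true)
        = insert s (Finset.univ.filter (fun j => y j = true)) := by
      ext j
      rcases eq_or_ne j s with rfl | hj
      · simp [hey, hys']
      · simp [hey, Function.update_of_ne hj, hj]
    have hcnt : cnt (e y) = cnt y + 1 := by
      unfold cnt
      rw [hfe, Finset.card_insert_of_notMem hsnot]
    have hprod : bw q (e y) = q s * ∏ j ∈ Finset.univ.erase s,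
        (if y j = true then q j else 1 - q j) := by
      unfold bw
      rw [← Finset.mul_prod_erase Finset.univ _ (Finset.mem_univ s)]
      congr 1
      · rw [heys]; simp
      · apply Finset.prod_congr rfl
        intro j hj
        have hjs : j ≠ s := (Finset.mem_erase.mp hj).1
        rw [hey, Function.update_of_ne hjs]
    rw [hprod]
    by_cases hl : cnt y = l
    · rw [if_pos ⟨hfc, by rw [hfilter]; exact hl⟩, if_pos ⟨by rw [hcnt, hl], heys⟩]
    · have hcA : ¬ ((∀ j, j ∉ Finset.univ.erase s → y j = false) ∧
          ((Finset.univ.erase s).filter (fun j => y j = true)).card = l) := by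
        rintro ⟨-, h⟩
        rw [hfilter] at h
        exact hl h
      have hcB : ¬ (cnt (e y) = l + 1 ∧ e y s = true) := by
        rintro ⟨h, -⟩
        rw [hcnt] at h
        exact hl (Nat.succ_injective h)
      rw [if_neg hcA, if_neg hcB, mul_zero]

lemma pmfOn_nonneg (q : Fin d → ℝ) (hq : ∀ j, q j ∈ Set.Icc (0:ℝ) 1) (S : Finset (Fin d)) (l : ℕ) :
    0 ≤ pmfOn S q l := by
  apply Finset.sum_nonneg
  intro y _
  split
  · apply Finset.prod_nonneg
    intro j _
    rcases hq j with ⟨h0, h1⟩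
    split <;> linarith
  · exact le_rfl

lemma card_filter_lt (τ : ℕ) : ((Finset.univ.filter (fun s : Fin d => (s : ℕ) < τ)).card : ℝ) ≤ τ := by
  have h : (Finset.univ.filter (fun s : Fin d => (s : ℕ) < τ)).card ≤ (Finset.range τ).card := by
    refine Finset.card_le_card_of_injOn (fun s => (s : ℕ)) ?_ ?_
    · intro s hs
      simp only [Finset.coe_filter, Finset.mem_filter, Set.mem_setOf_eq] at hs
      exact Finset.mem_range.mpr hs.2
    · intro a _ b _ hab
      exact Fin.val_injective hab
  rw [Finset.card_range] at h
  exact_mod_cast h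







lemma omega_nonneg (q : Fin d → ℝ) (hq : ∀ j, q j ∈ Set.Icc (0:ℝ) 1) (τ l : ℕ) :
    0 ≤ omegaTL q τ l := by
  apply Finset.sum_nonneg
  intro s _
  exact mul_nonneg (hq s).1 (pmfOn_nonneg q hq _ l)

lemma omega_le (q : Fin d → ℝ) (hq : ∀ j, q j ∈ Set.Icc (0:ℝ) 1) (τ l : ℕ) :
    omegaTL q τ l ≤ (τ : ℝ) * pG q (l + 1) := by
  unfold omegaTL
  have h1 : ∀ s : Fin d, q s * pmfOn (Finset.univ.erase s) q l ≤ pG q (l + 1) := by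
    intro s
    rw [key q s l]
    unfold pG
    apply Finset.sum_le_sum
    intro y _
    split_ifs with h1 h2 h2
    · exact le_rfl
    · exact absurd h1.1 h2
    · exact bw_nonneg q hq y
    · exact le_rfl
  calc ∑ s ∈ Finset.univ.filter (fun s : Fin d => (s : ℕ) < τ),
        q s * pmfOn (Finset.univ.erase s) q l
      ≤ ∑ _s ∈ Finset.univ.filter (fun s : Fin d => (s : ℕ) < τ), pG q (l + 1) :=
        Finset.sum_le_sum (fun s _ => h1 s)
    _ = ((Finset.univ.filter (fun s : Fin d => (s : ℕ) < τ)).card : ℝ) * pG q (l + 1) := by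
        rw [Finset.sum_const, nsmul_eq_mul]
    _ ≤ (τ : ℝ) * pG q (l + 1) :=
        mul_le_mul_of_nonneg_right (card_filter_lt τ) (pG_nonneg q hq _)

lemma tail_gt (q : Fin d → ℝ) (hq : ∀ j, q j ∈ Set.Icc (0:ℝ) 1) (a : ℕ) :
    ∑ l ∈ Finset.Ico (a + 1) d, pG q (l + 1) ≤ probGt q a := by
  have h1 : ∑ l ∈ Finset.Ico (a + 1) d, pG q (l + 1)
      = ∑ k ∈ Finset.Ico (a + 2) (d + 1), pG q k := by
    rw [← Finset.map_add_right_Ico (a + 1) d 1, Finset.sum_map]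
    rfl
  rw [h1]
  unfold pG probGt
  rw [Finset.sum_comm]
  apply Finset.sum_le_sum
  intro y _
  rw [Finset.sum_ite_eq (Finset.Ico (a + 2) (d + 1)) (cnt y) (fun _ => bw q y)]
  split_ifs with h1 h2 h2
  · exact le_rfl
  · exfalso
    exact h2 (by have := (Finset.mem_Ico.mp h1).1; omega)
  · exact bw_nonneg q hq y
  · exact le_rfl

lemma tail_le (q : Fin d → ℝ) (hq : ∀ j, q j ∈ Set.Icc (0:ℝ) 1) (a : ℕ) :
    ∑ l ∈ Finset.range a, pG q (l + 1) ≤ probLe q a := by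
  have h1 : ∑ l ∈ Finset.range a, pG q (l + 1)
      = ∑ k ∈ Finset.Ico 1 (a + 1), pG q k := by
    rw [Finset.range_eq_Ico, ← Finset.map_add_right_Ico 0 a 1, Finset.sum_map]
    rfl
  rw [h1]
  unfold pG probLe
  rw [Finset.sum_comm]
  apply Finset.sum_le_sum
  intro y _
  rw [Finset.sum_ite_eq (Finset.Ico 1 (a + 1)) (cnt y) (fun _ => bw q y)]
  split_ifs with h1 h2 h2
  · exact le_rfl
  · exfalso
    exact h2 (by have := (Finset.mem_Ico.mp h1).2; omega)
  · exact bw_nonneg q hq y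
  · exact le_rfl

end OmegaAux

/-- **Truncation error of the volume-score tail sums.** With `q_1 ≥ ⋯ ≥ q_d`, `γ ≥ 0`,
`1 ≤ τ ≤ d`, `0 ≤ l_L ≤ l_U ≤ d-1`:
(i) the upper tail is at most `(2τ/(τ+l_U+γ+1)) P(Γ > l_U)`;
(ii) the lower tail is at most `(2τ/(τ+γ+1)) P(Γ ≤ l_L)`;
hence the truncation error is at most the sum of the two bounds. -/
theorem omega_truncation_error {d : ℕ} (γ : ℝ) (hγ : 0 ≤ γ) (q : Fin d → ℝ)
    (hq : ∀ j, q j ∈ Set.Icc (0 : ℝ) 1) (hsort : Antitone q)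
    (τ : ℕ) (hτ1 : 1 ≤ τ) (hτd : τ ≤ d)
    (lL lU : ℕ) (hll : lL ≤ lU) (hlu : lU ≤ d - 1) :
    (∑ l ∈ Finset.Ico (lU + 1) d, 2 * omegaTL q τ l / ((τ : ℝ) + (l : ℝ) + γ + 1) ≤
        (2 * (τ : ℝ) / ((τ : ℝ) + (lU : ℝ) + γ + 1)) * probGt q lU) ∧
    (∑ l ∈ Finset.range lL, 2 * omegaTL q τ l / ((τ : ℝ) + (l : ℝ) + γ + 1) ≤
        (2 * (τ : ℝ) / ((τ : ℝ) + γ + 1)) * probLe q lL) ∧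
    |(∑ l ∈ Finset.range d, 2 * omegaTL q τ l / ((τ : ℝ) + (l : ℝ) + γ + 1)) -
        ∑ l ∈ Finset.Icc lL lU, 2 * omegaTL q τ l / ((τ : ℝ) + (l : ℝ) + γ + 1)| ≤
      (2 * (τ : ℝ) / ((τ : ℝ) + (lU : ℝ) + γ + 1)) * probGt q lU +
        (2 * (τ : ℝ) / ((τ : ℝ) + γ + 1)) * probLe q lL := by
  have hd : 1 ≤ d := le_trans hτ1 hτd
  have hτR : (1 : ℝ) ≤ (τ : ℝ) := by exact_mod_cast hτ1
  have hdenU : (0 : ℝ) < (τ : ℝ) + (lU : ℝ) + γ + 1 := by positivity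
  have hden0 : (0 : ℝ) < (τ : ℝ) + γ + 1 := by positivity
  set f : ℕ → ℝ := fun l => 2 * omegaTL q τ l / ((τ : ℝ) + (l : ℝ) + γ + 1) with hf
  have hfnonneg : ∀ l, 0 ≤ f l := by
    intro l
    apply div_nonneg
    · have := OmegaAux.omega_nonneg q hq τ l
      linarith
    · have : (0:ℝ) ≤ (l:ℝ) := Nat.cast_nonneg l
      linarith
  have hi : ∑ l ∈ Finset.Ico (lU + 1) d, f l ≤
      (2 * (τ : ℝ) / ((τ : ℝ) + (lU : ℝ) + γ + 1)) * probGt q lU := by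
    calc ∑ l ∈ Finset.Ico (lU + 1) d, f l
        ≤ ∑ l ∈ Finset.Ico (lU + 1) d,
            2 * ((τ : ℝ) * OmegaAux.pG q (l + 1)) / ((τ : ℝ) + (lU : ℝ) + γ + 1) := by
          apply Finset.sum_le_sum
          intro l hl
          have hl1 : lU + 1 ≤ l := (Finset.mem_Ico.mp hl).1
          have hlR : (lU : ℝ) ≤ (l : ℝ) := by exact_mod_cast le_trans (Nat.le_succ lU) hl1
          apply div_le_div₀
          · have := le_trans (OmegaAux.omega_nonneg q hq τ l) (OmegaAux.omega_le q hq τ l)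
            linarith
          · have := OmegaAux.omega_le q hq τ l
            linarith
          · exact hdenU
          · linarith
      _ = (2 * (τ : ℝ) / ((τ : ℝ) + (lU : ℝ) + γ + 1)) *
            ∑ l ∈ Finset.Ico (lU + 1) d, OmegaAux.pG q (l + 1) := by
          rw [Finset.mul_sum]
          apply Finset.sum_congr rfl
          intro l _
          ring
      _ ≤ (2 * (τ : ℝ) / ((τ : ℝ) + (lU : ℝ) + γ + 1)) * probGt q lU := by
          apply mul_le_mul_of_nonneg_left (OmegaAux.tail_gt q hq lU)
          positivity
  have hii : ∑ l ∈ Finset.range lL, f l ≤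
      (2 * (τ : ℝ) / ((τ : ℝ) + γ + 1)) * probLe q lL := by
    calc ∑ l ∈ Finset.range lL, f l
        ≤ ∑ l ∈ Finset.range lL,
            2 * ((τ : ℝ) * OmegaAux.pG q (l + 1)) / ((τ : ℝ) + γ + 1) := by
          apply Finset.sum_le_sum
          intro l _
          have hlR : (0 : ℝ) ≤ (l : ℝ) := Nat.cast_nonneg l
          apply div_le_div₀
          · have := le_trans (OmegaAux.omega_nonneg q hq τ l) (OmegaAux.omega_le q hq τ l)
            linarith
          · have := OmegaAux.omega_le q hq τ l
            linarith
          · exact hden0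
          · linarith
      _ = (2 * (τ : ℝ) / ((τ : ℝ) + γ + 1)) *
            ∑ l ∈ Finset.range lL, OmegaAux.pG q (l + 1) := by
          rw [Finset.mul_sum]
          apply Finset.sum_congr rfl
          intro l _
          ring
      _ ≤ (2 * (τ : ℝ) / ((τ : ℝ) + γ + 1)) * probLe q lL := by
          apply mul_le_mul_of_nonneg_left (OmegaAux.tail_le q hq lL)
          positivity
  refine ⟨hi, hii, ?_⟩
  have hub : lU + 1 ≤ d := by omega
  have hsplit : ∑ l ∈ Finset.range d, f l =
      (∑ l ∈ Finset.Ico 0 lL, f l + ∑ l ∈ Finset.Ico lL (lU + 1), f l) +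
        ∑ l ∈ Finset.Ico (lU + 1) d, f l := by
    rw [Finset.range_eq_Ico, ← Finset.sum_Ico_consecutive f (Nat.zero_le (lU + 1)) hub,
      ← Finset.sum_Ico_consecutive f (Nat.zero_le lL) (by omega : lL ≤ lU + 1)]
  have hIcc : ∑ l ∈ Finset.Icc lL lU, f l = ∑ l ∈ Finset.Ico lL (lU + 1), f l := by
    rw [Finset.Ico_add_one_right_eq_Icc]
  have hdiff : (∑ l ∈ Finset.range d, f l) - ∑ l ∈ Finset.Icc lL lU, f l =
      ∑ l ∈ Finset.range lL, f l + ∑ l ∈ Finset.Ico (lU + 1) d, f l := by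
    rw [hsplit, hIcc, Finset.range_eq_Ico]
    ring
  rw [hdiff, abs_of_nonneg (by
    apply add_nonneg <;> exact Finset.sum_nonneg (fun l _ => hfnonneg l))]
  linarith
end

section
/- Assume q_1 ≥ q_2 ≥ ⋯ ≥ q_d, γ ≥ 0, and let 1 ≤ τ ≤ d−1 with τ + γ > 0 and q_{τ+1} < 1. Define ϖ(τ) = (Σ_{s=1}^{τ} q_s + γ) · Σ_{l=0}^{d−τ} P(Γ_{∖{1,…,τ}} = l)/(τ + l + γ), where Γ_{∖{1,…,τ}} = Σ_{j>τ} B_j. If Σ_{s=1}^{τ} q_s + γ ≥ (q_{τ+1}/(1 − q_{τ+1})) · max( d + γ, ((d−τ) q_{τ+1} + τ + γ)²/(τ + γ) ), then ϖ(τ) ≥ ϖ(τ') for all τ' ∈ {τ+1, …, d}. -/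
open Finset

/-- The IoU volume score for sorted probabilities `q_1 ≥ ⋯ ≥ q_d`:
`ϖ(τ) = (Σ_{s=1}^{τ} q_s + γ) · Σ_{l=0}^{d-τ} P(Γ_{∖{1,…,τ}} = l)/(τ + l + γ)`,
where `Γ_{∖{1,…,τ}} = Σ_{j>τ} Bⱼ`. -/
noncomputable def iouVol {d : ℕ} (γ : ℝ) (q : Fin d → ℝ) (τ : ℕ) : ℝ :=
  ((∑ s ∈ Finset.univ.filter (fun s : Fin d => (s : ℕ) < τ), q s) + γ) *
    ∑ l ∈ Finset.range (d - τ + 1),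
      pmfOn (Finset.univ.filter (fun s : Fin d => τ ≤ (s : ℕ))) q l /
        ((τ : ℝ) + (l : ℝ) + γ)

noncomputable def pb {d : ℕ} (S : Finset (Fin d)) (q : Fin d → ℝ) (l : ℕ) : ℝ :=
  ∑ T ∈ S.powersetCard l, (∏ j ∈ T, q j) * ∏ j ∈ S \ T, (1 - q j)

lemma pmfOn_eq_pb {d : ℕ} (S : Finset (Fin d)) (q : Fin d → ℝ) (l : ℕ) :
    pmfOn S q l = pb S q l := by
  classical
  unfold pmfOn pb
  rw [← Finset.sum_filter]
  refine Finset.sum_bij' (i := fun y _ => S.filter fun j => y j = true)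
    (j := fun T _ => fun j => decide (j ∈ T)) ?_ ?_ ?_ ?_ ?_
  · intro y hy
    rw [Finset.mem_filter] at hy
    exact Finset.mem_powersetCard.2 ⟨Finset.filter_subset _ _, hy.2.2⟩
  · intro T hT
    rw [Finset.mem_powersetCard] at hT
    rw [Finset.mem_filter]
    refine ⟨Finset.mem_univ _, fun j hj => ?_, ?_⟩
    · simp only [decide_eq_false_iff_not]
      exact fun hjT => hj (hT.1 hjT)
    · have : (S.filter fun j => decide (j ∈ T) = true) = T := by
        ext x
        simp only [Finset.mem_filter, decide_eq_true_eq]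
        exact ⟨fun h => h.2, fun h => ⟨hT.1 h, h⟩⟩
      rw [this, hT.2]
  · intro y hy
    rw [Finset.mem_filter] at hy
    funext j
    by_cases hjS : j ∈ S
    · simp [Finset.mem_filter, hjS]
    · simp [Finset.mem_filter, hjS, hy.2.1 j hjS]
  · intro T hT
    rw [Finset.mem_powersetCard] at hT
    ext x
    simp only [Finset.mem_filter, decide_eq_true_eq]
    exact ⟨fun h => h.2, fun h => ⟨hT.1 h, h⟩⟩
  · intro y hy
    have h2 : S \ (S.filter fun j => y j = true) = S.filter (fun j => ¬ y j = true) := by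
      ext x
      simp only [Finset.mem_filter, Finset.mem_sdiff]
      tauto
    rw [h2, ← Finset.prod_filter_mul_prod_filter_not S (fun j => y j = true)]
    congr 1
    · exact Finset.prod_congr rfl fun j hj => if_pos (Finset.mem_filter.1 hj).2
    · exact Finset.prod_congr rfl fun j hj => if_neg (Finset.mem_filter.1 hj).2

lemma pb_nonneg {d : ℕ} {S : Finset (Fin d)} {q : Fin d → ℝ}
    (hq : ∀ j ∈ S, 0 ≤ q j ∧ q j ≤ 1) (l : ℕ) : 0 ≤ pb S q l := by
  refine Finset.sum_nonneg fun T hT => ?_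
  have hTS := (Finset.mem_powersetCard.1 hT).1
  refine mul_nonneg (Finset.prod_nonneg fun j hj => (hq j (hTS hj)).1)
    (Finset.prod_nonneg fun j hj => ?_)
  have := (hq j (Finset.mem_sdiff.1 hj).1).2
  linarith

lemma pb_zero_of_lt {d : ℕ} {S : Finset (Fin d)} {q : Fin d → ℝ} {l : ℕ}
    (h : S.card < l) : pb S q l = 0 := by
  unfold pb
  rw [Finset.powersetCard_eq_empty.2 h, Finset.sum_empty]

lemma pb_insert_zero {d : ℕ} {i : Fin d} {S : Finset (Fin d)} (h : i ∉ S) (q : Fin d → ℝ) :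
    pb (insert i S) q 0 = (1 - q i) * pb S q 0 := by
  simp [pb, Finset.prod_insert h]

lemma pb_insert_succ {d : ℕ} {i : Fin d} {S : Finset (Fin d)} (h : i ∉ S) (q : Fin d → ℝ)
    (l : ℕ) : pb (insert i S) q (l+1) = (1 - q i) * pb S q (l+1) + q i * pb S q l := by
  classical
  unfold pb
  rw [Finset.powersetCard_succ_insert h, Finset.sum_union, Finset.sum_image]
  · congr 1
    · rw [Finset.mul_sum]
      refine Finset.sum_congr rfl fun T hT => ?_
      have hTS := (Finset.mem_powersetCard.1 hT).1
      have hiT : i ∉ T := fun hx => h (hTS hx)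
      have h1 : insert i S \ T = insert i (S \ T) := by
        ext x
        simp only [Finset.mem_sdiff, Finset.mem_insert]
        constructor
        · rintro ⟨hx1 | hxb, hx2⟩
          · exact Or.inl hx1
          · exact Or.inr ⟨hxb, hx2⟩
        · rintro (rfl | ⟨hx1, hx2⟩)
          · exact ⟨Or.inl rfl, hiT⟩
          · exact ⟨Or.inr hx1, hx2⟩
      rw [h1, Finset.prod_insert (fun hx => h (Finset.mem_sdiff.1 hx).1)]
      ring
    · rw [Finset.mul_sum]
      refine Finset.sum_congr rfl fun T hT => ?_
      have hTS := (Finset.mem_powersetCard.1 hT).1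
      have hiT : i ∉ T := fun hx => h (hTS hx)
      have h1 : insert i S \ insert i T = S \ T := by
        ext x
        simp only [Finset.mem_sdiff, Finset.mem_insert, not_or]
        constructor
        · rintro ⟨hx1 | hx1, hx2, hx3⟩
          · exact absurd hx1 hx2
          · exact ⟨hx1, hx3⟩
        · rintro ⟨hx1, hx2⟩
          exact ⟨Or.inr hx1, fun hxi => h (hxi ▸ hx1), hx2⟩
      rw [h1, Finset.prod_insert hiT]
      ring
  · intro A hA B hB hAB
    have hiA : i ∉ A := fun hx => h ((Finset.mem_powersetCard.1 hA).1 hx)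
    have hiB : i ∉ B := fun hx => h ((Finset.mem_powersetCard.1 hB).1 hx)
    rw [← Finset.erase_insert hiA, ← Finset.erase_insert hiB, hAB]
  · rw [Finset.disjoint_left]
    intro T hT hT2
    rcases Finset.mem_image.1 hT2 with ⟨B, _, rfl⟩
    exact h ((Finset.mem_powersetCard.1 hT).1 (Finset.mem_insert_self i B))

lemma pb_sum {d : ℕ} (q : Fin d → ℝ) (S : Finset (Fin d))
    (hq : ∀ j ∈ S, 0 ≤ q j ∧ q j ≤ 1) :
    ∑ l ∈ Finset.range (S.card + 1), pb S q l = 1 := by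
  classical
  induction S using Finset.induction_on with
  | empty => simp [pb]
  | @insert i S hi ih =>
    have hq' : ∀ j ∈ S, 0 ≤ q j ∧ q j ≤ 1 := fun j hj => hq j (Finset.mem_insert_of_mem hj)
    have hv := ih hq'
    have h0 : pb S q (S.card + 1) = 0 := pb_zero_of_lt (by omega)
    have hu : (∑ l ∈ Finset.range (S.card + 1), pb S q (l+1)) + pb S q 0 = 1 := by
      rw [← Finset.sum_range_succ']
      rw [Finset.sum_range_succ, h0, add_zero, hv]
    rw [Finset.card_insert_of_notMem hi, Finset.sum_range_succ']
    simp only [pb_insert_succ hi, pb_insert_zero hi]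
    rw [Finset.sum_add_distrib]
    have e1 : ∑ l ∈ Finset.range (S.card+1), (1 - q i) * pb S q (l+1)
        = (1 - q i) * ∑ l ∈ Finset.range (S.card+1), pb S q (l+1) := by rw [Finset.mul_sum]
    have e2 : ∑ l ∈ Finset.range (S.card+1), q i * pb S q l
        = q i * ∑ l ∈ Finset.range (S.card+1), pb S q l := by rw [Finset.mul_sum]
    rw [e1, e2, hv]
    linear_combination (1 - q i) * hu

lemma pb_mean {d : ℕ} (q : Fin d → ℝ) (S : Finset (Fin d))
    (hq : ∀ j ∈ S, 0 ≤ q j ∧ q j ≤ 1) :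
    ∑ l ∈ Finset.range (S.card + 1), (l : ℝ) * pb S q l = ∑ j ∈ S, q j := by
  classical
  induction S using Finset.induction_on with
  | empty => simp [pb]
  | @insert i S hi ih =>
    have hq' : ∀ j ∈ S, 0 ≤ q j ∧ q j ≤ 1 := fun j hj => hq j (Finset.mem_insert_of_mem hj)
    have hμ := ih hq'
    have hv := pb_sum q S hq'
    have h0 : pb S q (S.card + 1) = 0 := pb_zero_of_lt (by omega)
    have hA : ∑ l ∈ Finset.range (S.card+1), ((l:ℝ)+1) * pb S q (l+1) = ∑ j ∈ S, q j := by
      have : ∑ l ∈ Finset.range (S.card + 1 + 1), (l:ℝ) * pb S q l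
          = ∑ j ∈ S, q j := by
        rw [Finset.sum_range_succ, h0, hμ]
        push_cast
        ring
      rw [Finset.sum_range_succ'] at this
      simpa using this
    rw [Finset.card_insert_of_notMem hi, Finset.sum_range_succ']
    simp only [pb_insert_succ hi, pb_insert_zero hi]
    rw [Finset.sum_insert hi]
    push_cast
    have expand : ∑ l ∈ Finset.range (S.card+1),
        ((l:ℝ)+1) * ((1 - q i) * pb S q (l+1) + q i * pb S q l)
        = (1 - q i) * (∑ l ∈ Finset.range (S.card+1), ((l:ℝ)+1) * pb S q (l+1))
          + q i * (∑ l ∈ Finset.range (S.card+1), (l:ℝ) * pb S q l)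
          + q i * (∑ l ∈ Finset.range (S.card+1), pb S q l) := by
      rw [Finset.mul_sum, Finset.mul_sum, Finset.mul_sum, ← Finset.sum_add_distrib,
        ← Finset.sum_add_distrib]
      exact Finset.sum_congr rfl fun l _ => by ring
    rw [expand, hA, hμ, hv]
    ring

lemma tangent_ineq (U v : ℝ) (hU : 0 < U) (hv : 0 < v) :
    1/(U*(U+1)) - (2*U+1)*(v-U)/(U^2*(U+1)^2) ≤ 1/(v*(v+1)) := by
  have hU1 : 0 < U + 1 := by linarith
  have hv1 : 0 < v + 1 := by linarith
  have hden : 0 < v*(v+1)*(U^2*(U+1)^2) := by positivity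
  have key : 1/(v*(v+1)) - (1/(U*(U+1)) - (2*U+1)*(v-U)/(U^2*(U+1)^2))
      = (v-U)^2*((2*U+1)*v + (U+1)^2) / (v*(v+1)*(U^2*(U+1)^2)) := by
    field_simp
    ring
  have hnum : 0 ≤ (v-U)^2*((2*U+1)*v + (U+1)^2) := by
    have : 0 ≤ (2*U+1)*v + (U+1)^2 := by positivity
    positivity
  have := div_nonneg hnum hden.le
  linarith [key ▸ this]

lemma one_div_split (v : ℝ) (hv : 0 < v) : 1/v - 1/(v+1) = 1/(v*(v+1)) := by
  field_simp
  ring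

lemma prop_claim (a n p : ℝ) (ha : 0 < a) (hn : 2 ≤ n) (hp0 : 0 ≤ p) (hp1 : p ≤ 1) :
    ((n-1)*p + a + 1)^2/(a+1) ≤ max (n+a) ((n*p+a)^2/a) := by
  rcases le_or_gt (((n-1)*p + a + 1)^2) ((a+1)*(n+a)) with h | h
  · exact le_max_of_le_left ((div_le_iff₀ (by linarith)).2 (by linarith))
  · refine le_max_of_le_right ?_
    rw [div_le_div_iff₀ (by linarith) ha]
    have hT : 0 ≤ (n*p+a) + n*(1-p) - 2*(n*p+a)*(1-p) - (1-p)^2 := by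
      by_contra hU
      push_neg at hU
      nlinarith [mul_pos (show (0:ℝ) < n - 1 by linarith)
          (show (0:ℝ) < 2*(n*p+a)*(1-p) + (1-p)^2 - (n*p+a) - n*(1-p) by linarith),
        mul_nonneg (mul_nonneg (by linarith : (0:ℝ) ≤ n) (by linarith : (0:ℝ) ≤ n-1))
          (sq_nonneg (1-p))]
    nlinarith [mul_nonneg (by linarith : (0:ℝ) ≤ a+1) hT]

lemma cond_step (γ dd tt p x C : ℝ) (ha : 0 < tt + γ) (hn : tt + 2 ≤ dd)
    (hp0 : 0 ≤ p) (hp1 : p ≤ 1) (hx0 : 0 ≤ x) (hxp : x ≤ p) (hC : 0 ≤ C)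
    (h : p * max (dd + γ) (((dd - tt)*p + tt + γ)^2/(tt+γ)) ≤ C*(1-p)) :
    x * max (dd + γ) (((dd - (tt+1))*x + (tt+1) + γ)^2/((tt+1)+γ)) ≤ (C+p)*(1-x) := by
  set X := max (dd + γ) (((dd - tt)*p + tt + γ)^2/(tt+γ)) with hX
  have hdd : 0 < dd + γ := by linarith
  have hX0 : 0 < X := lt_of_lt_of_le hdd (le_max_left _ _)
  have hmono : ((dd - (tt+1))*x + (tt+1) + γ)^2/((tt+1)+γ)
      ≤ ((dd - (tt+1))*p + (tt+1) + γ)^2/((tt+1)+γ) := by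
    have h1 : 0 ≤ (dd - (tt+1))*x + (tt+1) + γ := by nlinarith
    have h2 : (dd - (tt+1))*x + (tt+1) + γ ≤ (dd - (tt+1))*p + (tt+1) + γ := by nlinarith
    have := pow_le_pow_left₀ h1 h2 2
    apply div_le_div_of_nonneg_right this (by linarith)
  have hclaim : ((dd - (tt+1))*p + (tt+1) + γ)^2/((tt+1)+γ) ≤ X := by
    have := prop_claim (tt+γ) (dd-tt) p ha (by linarith) hp0 hp1
    have e1 : ((dd-tt)-1)*p + (tt+γ) + 1 = (dd - (tt+1))*p + (tt+1) + γ := by ring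
    have e2 : (tt+γ)+1 = (tt+1)+γ := by ring
    have e3 : (dd-tt) + (tt+γ) = dd + γ := by ring
    have e4 : (dd-tt)*p + (tt+γ) = (dd-tt)*p + tt + γ := by ring
    rw [e1, e2, e3, e4] at this
    exact this
  have hmax : max (dd + γ) (((dd - (tt+1))*x + (tt+1) + γ)^2/((tt+1)+γ)) ≤ X :=
    max_le (le_max_left _ _) (le_trans hmono hclaim)
  calc x * max (dd + γ) (((dd - (tt+1))*x + (tt+1) + γ)^2/((tt+1)+γ))
      ≤ x * X := by
        exact mul_le_mul_of_nonneg_left hmax hx0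
    _ ≤ p * X := mul_le_mul_of_nonneg_right hxp hX0.le
    _ ≤ C*(1-p) := h
    _ ≤ (C+p)*(1-x) := by nlinarith

lemma card_filter_ge (d : ℕ) : ∀ t, t ≤ d →
    (Finset.univ.filter fun s : Fin d => t ≤ (s : ℕ)).card = d - t := by
  intro t
  induction t with
  | zero => intro _; simp
  | succ t ih =>
    intro h
    have htd : t < d := h
    have hins : (Finset.univ.filter fun s : Fin d => t ≤ (s : ℕ))
        = insert ⟨t, htd⟩ (Finset.univ.filter fun s : Fin d => t + 1 ≤ (s : ℕ)) := by
      ext s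
      simp only [Finset.mem_filter, Finset.mem_univ, true_and, Finset.mem_insert, Fin.ext_iff]
      omega
    have h2 := ih (Nat.le_of_succ_le h)
    rw [hins, Finset.card_insert_of_notMem (by simp)] at h2
    omega


set_option maxHeartbeats 2000000 in
lemma onestep {d : ℕ} (γ : ℝ) (hγ : 0 ≤ γ) (q : Fin d → ℝ)
    (hq : ∀ j, q j ∈ Set.Icc (0:ℝ) 1) (hsort : Antitone q)
    (t : ℕ) (ht : t < d) (ha : 0 < (t:ℝ) + γ)
    (hcond : q ⟨t, ht⟩ * ((((d:ℝ) - (t:ℝ)) * q ⟨t, ht⟩ + (t:ℝ) + γ)^2 / ((t:ℝ) + γ)) ≤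
      ((∑ s ∈ Finset.univ.filter (fun s : Fin d => (s : ℕ) < t), q s) + γ) * (1 - q ⟨t, ht⟩)) :
    iouVol γ q (t+1) ≤ iouVol γ q t := by
  classical
  set p : ℝ := q ⟨t, ht⟩ with hp
  set a : ℝ := (t:ℝ) + γ with haa
  set nn : ℝ := (d:ℝ) - (t:ℝ) with hnn
  set A : ℝ := ∑ s ∈ Finset.univ.filter (fun s : Fin d => (s : ℕ) < t), q s with hA
  set C : ℝ := A + γ with hC
  set S' : Finset (Fin d) := Finset.univ.filter (fun s : Fin d => t + 1 ≤ (s : ℕ)) with hS'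
  have hp0 : 0 ≤ p := (hq _).1
  have hp1 : p ≤ 1 := (hq _).2
  have hnn1 : 1 ≤ nn := by
    rw [hnn]
    have : (t:ℝ) + 1 ≤ (d:ℝ) := by exact_mod_cast ht
    linarith
  have hmem : (⟨t, ht⟩ : Fin d) ∉ S' := by simp [hS']
  have hSins : (Finset.univ.filter fun s : Fin d => t ≤ (s : ℕ)) = insert ⟨t, ht⟩ S' := by
    ext s
    simp only [hS', Finset.mem_filter, Finset.mem_univ, true_and, Finset.mem_insert, Fin.ext_iff]
    omega
  have hcard' : S'.card = d - (t+1) := card_filter_ge d (t+1) ht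
  have hcard'' : S'.card + 1 = d - t := by omega
  have hqS' : ∀ j ∈ S', 0 ≤ q j ∧ q j ≤ 1 := fun j _ => ⟨(hq j).1, (hq j).2⟩
  have hw : ∀ l, 0 ≤ pb S' q l := fun l => pb_nonneg hqS' l
  have hsum1 : ∑ l ∈ Finset.range (d - t), pb S' q l = 1 := by
    rw [← hcard'']; exact pb_sum q S' hqS'
  set μ : ℝ := ∑ j ∈ S', q j with hμ
  have hmean1 : ∑ l ∈ Finset.range (d - t), (l:ℝ) * pb S' q l = μ := by
    rw [← hcard'']; exact pb_mean q S' hqS'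
  have hμ0 : 0 ≤ μ := Finset.sum_nonneg fun j hj => (hqS' j hj).1
  have hμle : μ ≤ (nn - 1) * p := by
    have hle : ∀ j ∈ S', q j ≤ p := by
      intro j hj
      refine hsort ?_
      rw [Fin.le_def]
      have : t + 1 ≤ (j:ℕ) := by
        have := Finset.mem_filter.1 hj
        simpa [hS'] using this.2
      simpa using by omega
    calc μ ≤ ∑ _j ∈ S', p := Finset.sum_le_sum hle
    _ = (S'.card : ℝ) * p := by rw [Finset.sum_const, nsmul_eq_mul]
    _ = (nn - 1) * p := by
        congr 1
        rw [hcard', hnn]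
        have h1 : (1:ℕ) ≤ d - t := by omega
        push_cast [Nat.cast_sub (by omega : t + 1 ≤ d)]
        ring
  set M : ℝ := nn * p + a with hM
  have hMa : a ≤ M := by nlinarith
  set U : ℝ := a + (nn - 1) * p with hU
  have hU0 : 0 < U := by nlinarith
  have hUM : U = M - p := by rw [hU, hM]; ring
  -- the three sums
  set E' : ℝ := ∑ l ∈ Finset.range (d - t), pb S' q l / ((t:ℝ) + 1 + (l:ℝ) + γ) with hE'
  set F : ℝ := ∑ l ∈ Finset.range (d - t), pb S' q l / ((t:ℝ) + (l:ℝ) + γ) with hF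
  -- decomposition of iouVol t
  have hdec : ∑ l ∈ Finset.range (d - t + 1),
      pb (Finset.univ.filter fun s : Fin d => t ≤ (s : ℕ)) q l / ((t:ℝ) + (l:ℝ) + γ)
      = (1 - p) * F + p * E' := by
    rw [Finset.sum_range_succ']
    have step : ∀ l ∈ Finset.range (d - t),
        pb (Finset.univ.filter fun s : Fin d => t ≤ (s : ℕ)) q (l+1) / ((t:ℝ) + ((l:ℕ)+1 : ℕ) + γ)
        = (1 - p) * (pb S' q (l+1) / ((t:ℝ) + 1 + (l:ℝ) + γ))
          + p * (pb S' q l / ((t:ℝ) + 1 + (l:ℝ) + γ)) := by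
      intro l _
      rw [hSins, pb_insert_succ hmem]
      have : ((t:ℝ) + ((l:ℕ)+1 : ℕ) + γ) = (t:ℝ) + 1 + (l:ℝ) + γ := by push_cast; ring
      rw [this]
      ring
    rw [Finset.sum_congr rfl step]
    rw [Finset.sum_add_distrib]
    have e0 : pb (Finset.univ.filter fun s : Fin d => t ≤ (s : ℕ)) q 0 / ((t:ℝ) + ((0:ℕ):ℝ) + γ)
        = (1 - p) * (pb S' q 0 / ((t:ℝ) + ((0:ℕ):ℝ) + γ)) := by
      rw [hSins, pb_insert_zero hmem]
      ring
    rw [e0]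
    have e1 : ∑ l ∈ Finset.range (d - t), (1 - p) * (pb S' q (l+1) / ((t:ℝ) + 1 + (l:ℝ) + γ))
        = (1 - p) * ∑ l ∈ Finset.range (d - t), pb S' q (l+1) / ((t:ℝ) + 1 + (l:ℝ) + γ) :=
      (Finset.mul_sum _ _ _).symm
    have e2 : ∑ l ∈ Finset.range (d - t), p * (pb S' q l / ((t:ℝ) + 1 + (l:ℝ) + γ))
        = p * E' := (Finset.mul_sum _ _ _).symm
    rw [e1, e2]
    have e3 : (∑ l ∈ Finset.range (d - t), pb S' q (l+1) / ((t:ℝ) + 1 + (l:ℝ) + γ))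
        + pb S' q 0 / ((t:ℝ) + ((0:ℕ):ℝ) + γ) = F := by
      have htop : pb S' q (d - t) = 0 := pb_zero_of_lt (by omega)
      have hFext : (∑ l ∈ Finset.range (d - t + 1), pb S' q l / ((t:ℝ) + (l:ℝ) + γ)) = F := by
        rw [Finset.sum_range_succ, htop, hF]
        simp
      rw [← hFext, Finset.sum_range_succ']
      congr 1
      refine Finset.sum_congr rfl fun l _ => ?_
      congr 1
      push_cast
      ring
    rw [← e3]
    ring
  -- E' ≤ 1/(a+1)
  have ha1 : (0:ℝ) < a + 1 := by linarith
  have hE'le : E' ≤ 1 / (a + 1) := by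
    have hterm : ∀ l ∈ Finset.range (d - t), pb S' q l / ((t:ℝ) + 1 + (l:ℝ) + γ)
        ≤ pb S' q l * (1 / (a + 1)) := by
      intro l _
      rw [div_eq_mul_one_div]
      refine mul_le_mul_of_nonneg_left ?_ (hw l)
      refine one_div_le_one_div_of_le ha1 ?_
      have hl0 : (0:ℝ) ≤ (l:ℝ) := Nat.cast_nonneg l
      rw [haa]; linarith
    calc E' ≤ ∑ l ∈ Finset.range (d - t), pb S' q l * (1 / (a + 1)) :=
          Finset.sum_le_sum hterm
    _ = (∑ l ∈ Finset.range (d - t), pb S' q l) * (1 / (a+1)) := (Finset.sum_mul _ _ _).symm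
    _ = 1 / (a+1) := by rw [hsum1, one_mul]
  have hUU : (0:ℝ) < U * (U + 1) := by nlinarith
  have hFE : 1 / (U * (U + 1)) ≤ F - E' := by
    have hsplit : F - E' = ∑ l ∈ Finset.range (d - t),
        pb S' q l * (1 / ((a + (l:ℝ)) * (a + (l:ℝ) + 1))) := by
      rw [hF, hE', ← Finset.sum_sub_distrib]
      refine Finset.sum_congr rfl fun l _ => ?_
      have hl0 : (0:ℝ) ≤ (l:ℝ) := Nat.cast_nonneg l
      have hv : (0:ℝ) < a + l := by linarith
      have hv1 : (0:ℝ) < a + l + 1 := by linarith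
      have d1 : (t:ℝ) + (l:ℝ) + γ = a + l := by rw [haa]; ring
      have d2 : (t:ℝ) + 1 + (l:ℝ) + γ = a + l + 1 := by rw [haa]; ring
      rw [d1, d2]
      field_simp
      ring
    rw [hsplit]
    have hlow : ∀ l ∈ Finset.range (d - t),
        pb S' q l * (1/(U*(U+1)) - (2*U+1)*((a + (l:ℝ)) - U)/(U^2*(U+1)^2))
        ≤ pb S' q l * (1 / ((a + (l:ℝ)) * (a + (l:ℝ) + 1))) := by
      intro l _
      refine mul_le_mul_of_nonneg_left ?_ (hw l)
      have hl0 : (0:ℝ) ≤ (l:ℝ) := Nat.cast_nonneg l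
      have hv : (0:ℝ) < a + l := by linarith
      have htan := tangent_ineq U (a + (l:ℝ)) hU0 hv
      exact htan
    have hsumLB : ∑ l ∈ Finset.range (d - t),
        pb S' q l * (1/(U*(U+1)) - (2*U+1)*((a + (l:ℝ)) - U)/(U^2*(U+1)^2))
        = 1/(U*(U+1)) - (2*U+1)*((a + μ) - U)/(U^2*(U+1)^2) := by
      have hterm : ∀ l ∈ Finset.range (d - t),
          pb S' q l * (1/(U*(U+1)) - (2*U+1)*((a + (l:ℝ)) - U)/(U^2*(U+1)^2))
          = (1/(U*(U+1)) - (2*U+1)*(a - U)/(U^2*(U+1)^2)) * pb S' q l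
            + (-((2*U+1)/(U^2*(U+1)^2))) * ((l:ℝ) * pb S' q l) := by
        intro l _
        ring
      rw [Finset.sum_congr rfl hterm, Finset.sum_add_distrib, ← Finset.mul_sum,
        ← Finset.mul_sum, hsum1, hmean1]
      ring
    have hc : (0:ℝ) ≤ (2*U+1)/(U^2*(U+1)^2) := by positivity
    have hneg : (a + μ) - U ≤ 0 := by rw [hU]; linarith [hμle]
    have h9 : (0:ℝ) ≤ (2*U+1)/(U^2*(U+1)^2) * (U - (a+μ)) :=
      mul_nonneg hc (by linarith)
    calc 1/(U*(U+1))
        ≤ 1/(U*(U+1)) - (2*U+1)*((a + μ) - U)/(U^2*(U+1)^2) := by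
          have h10 : (2*U+1)*((a + μ) - U)/(U^2*(U+1)^2)
              = -((2*U+1)/(U^2*(U+1)^2) * (U - (a+μ))) := by ring
          linarith [h9, h10]
      _ = ∑ l ∈ Finset.range (d - t),
          pb S' q l * (1/(U*(U+1)) - (2*U+1)*((a + (l:ℝ)) - U)/(U^2*(U+1)^2)) := hsumLB.symm
      _ ≤ ∑ l ∈ Finset.range (d - t),
          pb S' q l * (1 / ((a + (l:ℝ)) * (a + (l:ℝ) + 1))) := Finset.sum_le_sum hlow
  -- final assembly
  have hA0 : (0:ℝ) ≤ A := Finset.sum_nonneg fun j _ => (hq j).1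
  have hC0 : (0:ℝ) ≤ C := by rw [hC]; linarith
  have hCp : (0:ℝ) ≤ C * (1-p) := mul_nonneg hC0 (by linarith)
  have hs2 : a * (U * (U + 1)) ≤ (a+1) * M^2 := by
    have s1 : U * (U+1) ≤ M * (M+1) := by nlinarith
    have hM0 : (0:ℝ) ≤ M := by linarith
    have s2 : a * (M * (M+1)) ≤ (a+1) * M^2 := by
      nlinarith [mul_nonneg hM0 (by linarith : (0:ℝ) ≤ M - a)]
    nlinarith [mul_le_mul_of_nonneg_left s1 ha.le]
  have hMe : nn * p + (t:ℝ) + γ = M := by rw [hM, haa]; ring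
  rw [hMe] at hcond
  have hcond2 : p * M^2 ≤ C * (1-p) * a := by
    rw [mul_div_assoc'] at hcond
    exact (div_le_iff₀ ha).1 hcond
  have hdiv : p * (1/(a+1)) ≤ C*(1-p) * (1/(U*(U+1))) := by
    rw [mul_one_div, mul_one_div, div_le_div_iff₀ ha1 hUU]
    have big : a * (p * (U*(U+1))) ≤ a * (C*(1-p)*(a+1)) := by
      nlinarith [mul_le_mul_of_nonneg_left hs2 hp0,
        mul_le_mul_of_nonneg_right hcond2 (le_of_lt ha1)]
    exact le_of_mul_le_mul_left big ha
  have hfinal : p * E' ≤ C*(1-p)*(F - E') := by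
    calc p * E' ≤ p * (1/(a+1)) := mul_le_mul_of_nonneg_left hE'le hp0
    _ ≤ C*(1-p) * (1/(U*(U+1))) := hdiv
    _ ≤ C*(1-p)*(F - E') := mul_le_mul_of_nonneg_left hFE hCp
  unfold iouVol
  simp only [pmfOn_eq_pb]
  have hAins : Finset.univ.filter (fun s : Fin d => (s:ℕ) < t+1)
      = insert ⟨t, ht⟩ (Finset.univ.filter fun s : Fin d => (s:ℕ) < t) := by
    ext s
    simp only [Finset.mem_filter, Finset.mem_univ, true_and, Finset.mem_insert, Fin.ext_iff]
    omega
  have hAnot : (⟨t,ht⟩ : Fin d) ∉ Finset.univ.filter (fun s : Fin d => (s:ℕ) < t) := by simp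
  rw [hAins, Finset.sum_insert hAnot, ← hS', ← hp, ← hA, hdec]
  have hEq : ∑ l ∈ Finset.range (d - (t+1) + 1), pb S' q l / (((t:ℕ)+1 : ℕ) + (l:ℝ) + γ)
      = E' := by
    rw [hE']
    have hr : d - (t+1) + 1 = d - t := by omega
    rw [hr]
    refine Finset.sum_congr rfl fun l _ => ?_
    congr 1
    push_cast
    ring
  rw [hEq]
  rw [hC] at hfinal
  nlinarith [hfinal]

def Cnd {d : ℕ} (γ : ℝ) (q : Fin d → ℝ) (t : ℕ) : Prop :=
  ∀ h2 : t < d,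
    q ⟨t, h2⟩ * max ((d:ℝ) + γ)
        ((((d:ℝ) - (t:ℝ)) * q ⟨t, h2⟩ + (t:ℝ) + γ)^2 / ((t:ℝ) + γ)) ≤
      ((∑ s ∈ Finset.univ.filter (fun s : Fin d => (s : ℕ) < t), q s) + γ) * (1 - q ⟨t, h2⟩)

lemma sum_lt_succ {d : ℕ} (q : Fin d → ℝ) (t : ℕ) (ht : t < d) :
    ∑ s ∈ Finset.univ.filter (fun s : Fin d => (s : ℕ) < t + 1), q s
      = q ⟨t, ht⟩ + ∑ s ∈ Finset.univ.filter (fun s : Fin d => (s : ℕ) < t), q s := by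
  have hAins : Finset.univ.filter (fun s : Fin d => (s:ℕ) < t+1)
      = insert ⟨t, ht⟩ (Finset.univ.filter fun s : Fin d => (s:ℕ) < t) := by
    ext s
    simp only [Finset.mem_filter, Finset.mem_univ, true_and, Finset.mem_insert, Fin.ext_iff]
    omega
  rw [hAins, Finset.sum_insert (by simp)]

lemma cnd_propagate {d : ℕ} (γ : ℝ) (hγ : 0 ≤ γ) (q : Fin d → ℝ)
    (hq : ∀ j, q j ∈ Set.Icc (0:ℝ) 1) (hsort : Antitone q)
    (t : ℕ) (ht : t + 1 < d) (ha : 0 < (t:ℝ) + γ)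
    (hc : Cnd γ q t) : Cnd γ q (t+1) := by
  intro h2
  have ht' : t < d := by omega
  have hqsum0 : (0:ℝ) ≤ ∑ s ∈ Finset.univ.filter (fun s : Fin d => (s : ℕ) < t), q s :=
    Finset.sum_nonneg fun j _ => (hq j).1
  have hxp : q ⟨t+1, h2⟩ ≤ q ⟨t, ht'⟩ := hsort (by simp [Fin.le_def])
  have hkey := cond_step γ (d:ℝ) (t:ℝ) (q ⟨t, ht'⟩) (q ⟨t+1, h2⟩)
    ((∑ s ∈ Finset.univ.filter (fun s : Fin d => (s : ℕ) < t), q s) + γ)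
    ha (by push_cast; exact_mod_cast (by exact_mod_cast Nat.cast_le.2 ht : ((t+2:ℕ):ℝ) ≤ (d:ℝ)))
    (hq _).1 (hq _).2 (hq _).1 hxp (by linarith) (hc ht')
  rw [sum_lt_succ q t ht']
  push_cast at hkey ⊢
  have e1 : (∑ s ∈ Finset.univ.filter (fun s : Fin d => (s : ℕ) < t), q s + γ + q ⟨t, ht'⟩)
      = (q ⟨t, ht'⟩ + ∑ s ∈ Finset.univ.filter (fun s : Fin d => (s : ℕ) < t), q s + γ) := by
    ring
  rw [e1] at hkey
  exact hkey


/-- **IoU shrinkage.** If `q_1 ≥ ⋯ ≥ q_d`, `γ ≥ 0`, `1 ≤ τ ≤ d-1`, `τ + γ > 0`,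
`q_{τ+1} < 1` and
`Σ_{s=1}^τ q_s + γ ≥ (q_{τ+1}/(1-q_{τ+1})) max(d+γ, ((d-τ)q_{τ+1}+τ+γ)²/(τ+γ))`,
then `ϖ(τ) ≥ ϖ(τ')` for all `τ' ∈ {τ+1,…,d}`. -/
theorem iouVol_shrinkage {d : ℕ} (γ : ℝ) (hγ : 0 ≤ γ) (q : Fin d → ℝ)
    (hq : ∀ j, q j ∈ Set.Icc (0 : ℝ) 1) (hsort : Antitone q)
    (τ : ℕ) (hτ1 : 1 ≤ τ) (hτd : τ < d)
    (hpos : 0 < (τ : ℝ) + γ) (hlt : q ⟨τ, hτd⟩ < 1)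
    (hcond : (q ⟨τ, hτd⟩ / (1 - q ⟨τ, hτd⟩)) *
        max ((d : ℝ) + γ)
          ((((d : ℝ) - (τ : ℝ)) * q ⟨τ, hτd⟩ + (τ : ℝ) + γ) ^ 2 / ((τ : ℝ) + γ)) ≤
      (∑ s ∈ Finset.univ.filter (fun s : Fin d => (s : ℕ) < τ), q s) + γ) :
    ∀ τ', τ < τ' → τ' ≤ d → iouVol γ q τ' ≤ iouVol γ q τ := by
  have hstart : Cnd γ q τ := by
    intro h2
    have hne : (1:ℝ) - q ⟨τ, hτd⟩ > 0 := by linarith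
    have hmul := mul_le_mul_of_nonneg_right hcond (le_of_lt hne)
    have e : q ⟨τ, hτd⟩ / (1 - q ⟨τ, hτd⟩) *
        max ((d : ℝ) + γ)
          ((((d : ℝ) - (τ : ℝ)) * q ⟨τ, hτd⟩ + (τ : ℝ) + γ) ^ 2 / ((τ : ℝ) + γ))
        * (1 - q ⟨τ, hτd⟩)
        = q ⟨τ, hτd⟩ * max ((d : ℝ) + γ)
          ((((d : ℝ) - (τ : ℝ)) * q ⟨τ, hτd⟩ + (τ : ℝ) + γ) ^ 2 / ((τ : ℝ) + γ)) := by
      field_simp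
    rw [e] at hmul
    exact hmul
  have cnd_use : ∀ (t : ℕ) (ht : t < d), 0 < (t:ℝ) + γ → Cnd γ q t →
      q ⟨t, ht⟩ * ((((d:ℝ) - (t:ℝ)) * q ⟨t, ht⟩ + (t:ℝ) + γ)^2 / ((t:ℝ) + γ)) ≤
      ((∑ s ∈ Finset.univ.filter (fun s : Fin d => (s : ℕ) < t), q s) + γ) * (1 - q ⟨t, ht⟩) := by
    intro t ht hta hc
    refine le_trans (mul_le_mul_of_nonneg_left (le_max_right ((d:ℝ)+γ) _) (hq _).1) (hc ht)
  have key : ∀ m, τ + m ≤ d →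
      iouVol γ q (τ + m) ≤ iouVol γ q τ ∧ (τ + m < d → Cnd γ q (τ + m)) := by
    intro m
    induction m with
    | zero => exact fun _ => ⟨le_refl _, fun _ => hstart⟩
    | succ m ih =>
      intro h
      have h1 : τ + m < d := by omega
      obtain ⟨ihv, ihc⟩ := ih (by omega)
      have hc := ihc h1
      have hposm : 0 < ((τ + m : ℕ):ℝ) + γ := by
        push_cast
        have : (0:ℝ) ≤ (m:ℝ) := Nat.cast_nonneg m
        linarith
      have hstep : iouVol γ q (τ + m + 1) ≤ iouVol γ q (τ + m) :=
        onestep γ hγ q hq hsort (τ + m) h1 hposm (cnd_use (τ+m) h1 hposm hc)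
      refine ⟨le_trans hstep ihv, fun h2 => ?_⟩
      exact cnd_propagate γ hγ q hq hsort (τ + m) h2 hposm hc
  intro τ' h1 h2
  have := (key (τ' - τ) (by omega)).1
  rwa [show τ + (τ' - τ) = τ' from by omega] at this
end
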